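/- arXiv:1210.1239 — 3 statements merged into one kernel-verified Lean document; each statement's English description precedes it below -/
import Mathlib

section
/- Let A be a ring equipped with an exhaustive filtration F₀A ⊆ F₁A ⊆ F₂A ⊆ ⋯ by additive subgroups with (FᵢA)(FⱼA) ⊆ F_{i+j}A and ⋃ᵢ FᵢA = A. If the associated graded ring gr_F A = ⊕ᵢ FᵢA/F_{i-1}A is left Noetherian, then A is left Noetherian. -/
open DirectSum

/-- If the span of a set is finitely generated, some finite subset has the same span. -/
lemma exists_finset_subset_span_eq {R M : Type*} [Semiring R] [AddCommMonoid M] [Module R M]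
    (S : Set M) (h : (Submodule.span R S).FG) :
    ∃ T : Finset M, ↑T ⊆ S ∧ Submodule.span R (↑T : Set M) = Submodule.span R S := by
  classical
  obtain ⟨G, hG⟩ := h
  have hGmem : ∀ g ∈ G, (g : M) ∈ Submodule.span R S := fun g hg =>
    hG ▸ Submodule.subset_span hg
  have hch : ∀ g : {x // x ∈ G}, ∃ Tg : Finset M,
      ↑Tg ⊆ S ∧ (g : M) ∈ Submodule.span R (↑Tg : Set M) := fun g =>
    Submodule.mem_span_finite_of_mem_span (hGmem g g.2)
  choose Tg hTgS hTgmem using hch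
  refine ⟨G.attach.biUnion Tg, ?_, le_antisymm ?_ ?_⟩
  · intro x hx
    simp only [Finset.coe_biUnion, Set.mem_iUnion] at hx
    obtain ⟨g, _, hxg⟩ := hx
    exact hTgS g hxg
  · exact Submodule.span_le.2 fun x hx => by
      simp only [Finset.coe_biUnion, Set.mem_iUnion] at hx
      obtain ⟨g, _, hxg⟩ := hx
      exact Submodule.subset_span (hTgS g hxg)
  · rw [← hG]
    refine Submodule.span_le.2 fun g hg => ?_
    refine Submodule.span_mono ?_ (hTgmem ⟨g, hg⟩)
    intro x hx
    simp only [Finset.coe_biUnion, Set.mem_iUnion]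
    exact ⟨⟨g, hg⟩, Finset.mem_attach _ _, hx⟩

/-- Let `A` be a ring with an exhaustive filtration `F₀A ⊆ F₁A ⊆ ⋯` by additive subgroups
satisfying `(FᵢA)(FⱼA) ⊆ F_{i+j}A` and `⋃ᵢ FᵢA = A`, and let `B` be its associated graded
ring: `B` is internally graded by additive subgroups `gB i`, and for each `i` the symbol map
`π i : FᵢA → B` is an additive map landing in `gB i`, surjecting onto `gB i`, with kernel
`F_{i-1}A` (trivial kernel in degree `0`), multiplicative on symbols, and sending `1` to `1`.
If `B` is left Noetherian then `A` is left Noetherian. -/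
theorem isNoetherianRing_of_gr_isNoetherianRing
    (A B : Type*) [Ring A] [Ring B]
    (F : ℕ → AddSubgroup A) (hF : Monotone F)
    (hone : (1 : A) ∈ F 0)
    (hmul : ∀ i j : ℕ, ∀ a b : A, a ∈ F i → b ∈ F j → a * b ∈ F (i + j))
    (hexh : ∀ a : A, ∃ i, a ∈ F i)
    (gB : ℕ → AddSubgroup B)
    (hinternal : DirectSum.IsInternal (fun i => (gB i).toIntSubmodule))
    (π : ∀ i, F i →+ B)
    (hrange : ∀ i (a : F i), π i a ∈ gB i)
    (hsurj : ∀ i, ∀ b ∈ gB i, ∃ a : F i, π i a = b)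
    (hker0 : ∀ a : F 0, π 0 a = 0 ↔ a = 0)
    (hker : ∀ i (a : F (i + 1)), π (i + 1) a = 0 ↔ (a : A) ∈ F i)
    (hπone : π 0 ⟨1, hone⟩ = 1)
    (hπmul : ∀ i j (a : F i) (b : F j),
      π (i + j) ⟨(a : A) * (b : A), hmul i j a b a.2 b.2⟩ = π i a * π j b)
    (hB : IsNoetherianRing B) :
    IsNoetherianRing A := by
  classical
  -- graded ring structure on B
  have hone_mem : (1 : B) ∈ gB 0 := hπone ▸ hrange 0 ⟨1, hone⟩
  have hmul_mem : ∀ {i j : ℕ} {x y : B}, x ∈ gB i → y ∈ gB j → x * y ∈ gB (i + j) := by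
    intro i j x y hx hy
    obtain ⟨a, ha⟩ := hsurj i x hx
    obtain ⟨b, hb⟩ := hsurj j y hy
    rw [← ha, ← hb, ← hπmul]
    exact hrange _ _
  letI : SetLike.GradedMonoid gB :=
    { one_mem := hone_mem
      mul_mem := @fun i j x y hx hy => hmul_mem hx hy }
  have hint : DirectSum.IsInternal gB := hinternal
  letI : DirectSum.Decomposition gB := hint.chooseDecomposition
  letI : GradedRing gB := { ‹SetLike.GradedMonoid gB›, ‹DirectSum.Decomposition gB› with }
  -- helper: π is multiplicative with arbitrary degree proof
  have hπmul' : ∀ (i j n : ℕ) (hn : i + j = n) (x : F i) (y : F j)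
      (hxy : (x : A) * (y : A) ∈ F n),
      π n ⟨(x : A) * (y : A), hxy⟩ = π i x * π j y := by
    intro i j n hn x y hxy
    subst hn
    exact hπmul i j x y
  rw [isNoetherianRing_iff_ideal_fg]
  intro I
  set S : Set B := {b : B | ∃ i, ∃ a : F i, (a : A) ∈ I ∧ π i a = b} with hS
  obtain ⟨T, hTS, hTspan⟩ := exists_finset_subset_span_eq S
    ((isNoetherianRing_iff_ideal_fg B).mp hB _)
  have hch : ∀ t : {x // x ∈ T}, ∃ i, ∃ a : F i, (a : A) ∈ I ∧ π i a = (t : B) :=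
    fun t => hTS t.2
  choose d xa hxI hxπ using hch
  set G : Set A := Set.range (fun t : {x // x ∈ T} => ((xa t : A))) with hG
  have hGI : Ideal.span G ≤ I := by
    rw [Ideal.span_le]
    rintro _ ⟨t, rfl⟩
    exact hxI t
  -- key induction
  have key : ∀ n (a : A), a ∈ I → a ∈ F n → a ∈ Ideal.span G := by
    have main : ∀ n (a : A), a ∈ I → ∀ haF : a ∈ F n, ∃ a' : A,
        a' ∈ Ideal.span G ∧ ∃ h' : a - a' ∈ F n, π n ⟨a - a', h'⟩ = 0 := by
      intro n a haI haF
      set b : B := π n ⟨a, haF⟩ with hb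
      have hbgB : b ∈ gB n := hrange n _
      have hbJ : b ∈ Submodule.span B (↑T : Set B) := by
        rw [hTspan]
        exact Ideal.subset_span ⟨n, ⟨a, haF⟩, haI, rfl⟩
      obtain ⟨f, -, hf⟩ := Submodule.mem_span_finset.mp hbJ
      -- project the identity to degree n
      have hproj : ∀ (s : Finset {x // x ∈ T}) (g : {x // x ∈ T} → B),
          ((DirectSum.decompose gB (∑ t ∈ s, g t) n : gB n) : B)
            = ∑ t ∈ s, ((DirectSum.decompose gB (g t) n : gB n) : B) := by
        intro s g
        induction s using Finset.induction_on with
        | empty => simp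
        | insert _ _ hns ih =>
          rw [Finset.sum_insert hns, Finset.sum_insert hns, DirectSum.decompose_add,
            DirectSum.add_apply, AddSubgroup.coe_add, ih]
      have hsum : ∑ t ∈ T.attach, f (t : B) * (t : B) = b := by
        rw [← hf, ← Finset.sum_attach T (fun t => f t • t)]
        simp [smul_eq_mul]
      have hbdec : b = ∑ t ∈ T.attach,
          if d t ≤ n then ((DirectSum.decompose gB (f (t : B)) (n - d t) : gB (n - d t)) : B)
            * (t : B) else 0 := by
        have htmem : ∀ t : {x // x ∈ T}, (t : B) ∈ gB (d t) := fun t => hxπ t ▸ hrange _ _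
        calc b = ((DirectSum.decompose gB b n : gB n) : B) :=
              (DirectSum.decompose_of_mem_same gB hbgB).symm
          _ = ((DirectSum.decompose gB (∑ t ∈ T.attach, f (t : B) * (t : B)) n : gB n) : B) := by
              rw [hsum]
          _ = ∑ t ∈ T.attach, ((DirectSum.decompose gB (f (t : B) * (t : B)) n : gB n) : B) :=
              hproj _ _
          _ = _ := by
              refine Finset.sum_congr rfl fun t _ => ?_
              exact DirectSum.coe_decompose_mul_of_right_mem gB n (htmem t)
      -- lift coefficients
      have hc : ∀ t : {x // x ∈ T}, ∃ x : F (n - d t),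
          π (n - d t) x = ((DirectSum.decompose gB (f (t : B)) (n - d t) : gB (n - d t)) : B) :=
        fun t => hsurj _ _ (SetLike.coe_mem _)
      choose xc hxc using hc
      set s := T.attach.filter (fun t => d t ≤ n) with hs
      have hterm : ∀ t ∈ s, ((xc t : A) * (xa t : A)) ∈ F n := by
        intro t ht
        have hdt : d t ≤ n := (Finset.mem_filter.mp ht).2
        have := hmul _ _ _ _ (xc t).2 (xa t).2
        rwa [Nat.sub_add_cancel hdt] at this
      set a' : A := ∑ t ∈ s, (xc t : A) * (xa t : A) with ha'
      have ha'F : a' ∈ F n := AddSubgroup.sum_mem _ fun t ht => hterm t ht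
      have ha'span : a' ∈ Ideal.span G := by
        refine Ideal.sum_mem _ fun t _ => ?_
        exact Ideal.mul_mem_left _ _ (Ideal.subset_span ⟨t, rfl⟩)
      -- π n a' = b
      have hπa' : π n ⟨a', ha'F⟩ = b := by
        have hsub : (⟨a', ha'F⟩ : F n) = ∑ t ∈ s.attach, (⟨(xc t.1 : A) * (xa t.1 : A),
            hterm t.1 t.2⟩ : F n) := by
          apply Subtype.ext
          rw [AddSubmonoidClass.coe_finset_sum]
          simp only [ha']
          rw [← Finset.sum_attach s (fun t => (xc t : A) * (xa t : A))]
        rw [hsub, map_sum]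
        have : ∀ t ∈ s.attach, π n (⟨(xc t.1 : A) * (xa t.1 : A), hterm t.1 t.2⟩ : F n)
            = ((DirectSum.decompose gB (f (t.1 : B)) (n - d t.1) : gB (n - d t.1)) : B)
              * (t.1 : B) := by
          intro t _
          have hdt : d t.1 ≤ n := (Finset.mem_filter.mp t.2).2
          rw [hπmul' (n - d t.1) (d t.1) n (Nat.sub_add_cancel hdt) (xc t.1) (xa t.1)]
          rw [hxc, hxπ]
        rw [Finset.sum_congr rfl this]
        rw [Finset.sum_attach s (fun t => ((DirectSum.decompose gB (f (t : B)) (n - d t) :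
          gB (n - d t)) : B) * (t : B))]
        rw [hbdec, hs, Finset.sum_filter]
      have hsubF : a - a' ∈ F n := AddSubgroup.sub_mem _ haF ha'F
      refine ⟨a', ha'span, hsubF, ?_⟩
      have : (⟨a - a', hsubF⟩ : F n) = ⟨a, haF⟩ - ⟨a', ha'F⟩ := rfl
      rw [this, map_sub, hπa', hb, sub_self]
    intro n
    induction n with
    | zero =>
      intro a haI haF
      obtain ⟨a', h1, h2, h3⟩ := main 0 a haI haF
      have : (⟨a - a', h2⟩ : F 0) = 0 := (hker0 _).mp h3
      have h4 : a - a' = 0 := congrArg Subtype.val this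
      have h5 : a = a' := sub_eq_zero.mp h4
      rw [h5]; exact h1
    | succ m ih =>
      intro a haI haF
      obtain ⟨a', h1, h2, h3⟩ := main (m + 1) a haI haF
      have h4 : a - a' ∈ F m := (hker m _).mp h3
      have h5 : a - a' ∈ I := I.sub_mem haI (hGI h1)
      have h6 := ih (a - a') h5 h4
      have : a = (a - a') + a' := (sub_add_cancel a a').symm
      rw [this]
      exact Ideal.add_mem _ h6 h1
  have hIG : I = Ideal.span G := by
    apply le_antisymm
    · intro a haI
      obtain ⟨n, haF⟩ := hexh a
      exact key n a haI haF
    · exact hGI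
  rw [hIG]
  exact Submodule.fg_span (Set.finite_range _)
end

section
/- Let A be an associative unital C[t]-algebra in which t is central and a non-zero-divisor, and set A₀ = A/tA. Suppose A₀ is such that its center Z(A₀) is considered. For z₁, z₂ ∈ Z(A₀) choose lifts ẑ₁, ẑ₂ ∈ A; then [ẑ₁, ẑ₂] ∈ tA, and the element {z₁, z₂} := ([ẑ₁, ẑ₂]/t) mod tA lies in Z(A₀), is independent of the choice of lifts, and the resulting bracket { , } makes Z(A₀) into a Poisson algebra (C-bilinear, antisymmetric, satisfying the Jacobi identity and the Leibniz rule). -/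
/-- Hayashi's construction. Let `A` be a unital associative `ℂ[t]`-algebra in which `t` is
central and a non-zero-divisor, let `I = tA` and let `Z` be the set of elements of `A` that
are central modulo `tA` (the lifts of elements of the center `Z(A₀)` of `A₀ = A/tA`). Then
for lifts `ẑ₁, ẑ₂` of central elements the commutator `[ẑ₁, ẑ₂]` lies in `tA`; the divided
commutator `w` (with `[ẑ₁, ẑ₂] = t·w`) is again central mod `tA` and independent of the
choice of lifts mod `tA`; and the induced bracket on `Z(A₀)` is antisymmetric, additive and
`ℂ`-linear, and satisfies the Jacobi identity and the Leibniz rule — so it makes `Z(A₀)`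
into a Poisson algebra. -/
theorem hayashi_poisson_bracket
    (A : Type*) [Ring A] [Algebra ℂ A] (t : A)
    (hcen : ∀ a : A, t * a = a * t)
    (hreg : ∀ a : A, t * a = 0 → a = 0)
    (I : A → Prop) (hI : ∀ x, I x ↔ ∃ a, x = t * a)
    (Z : A → Prop) (hZ : ∀ z, Z z ↔ ∀ a : A, I (z * a - a * z)) :
    -- the commutator of lifts of central elements lies in tA
    (∀ z₁ z₂, Z z₁ → Z z₂ → I (z₁ * z₂ - z₂ * z₁)) ∧
    -- the divided commutator is central mod tA
    (∀ z₁ z₂ w, Z z₁ → Z z₂ → z₁ * z₂ - z₂ * z₁ = t * w → Z w) ∧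
    -- independence of the choice of lifts, mod tA
    (∀ z₁ z₁' z₂ z₂' w w', Z z₁ → Z z₂ → I (z₁ - z₁') → I (z₂ - z₂') →
      z₁ * z₂ - z₂ * z₁ = t * w → z₁' * z₂' - z₂' * z₁' = t * w' → I (w - w')) ∧
    -- antisymmetry
    (∀ z₁ z₂ w w', z₁ * z₂ - z₂ * z₁ = t * w → z₂ * z₁ - z₁ * z₂ = t * w' →
      I (w + w')) ∧
    -- additivity in the second argument
    (∀ z₁ z₂ z₃ w w₂ w₃, z₁ * (z₂ + z₃) - (z₂ + z₃) * z₁ = t * w →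
      z₁ * z₂ - z₂ * z₁ = t * w₂ → z₁ * z₃ - z₃ * z₁ = t * w₃ →
      I (w - (w₂ + w₃))) ∧
    -- ℂ-linearity in the second argument
    (∀ (c : ℂ) z₁ z₂ w w₂, z₁ * (c • z₂) - (c • z₂) * z₁ = t * w →
      z₁ * z₂ - z₂ * z₁ = t * w₂ → I (w - c • w₂)) ∧
    -- Jacobi identity mod tA
    (∀ z₁ z₂ z₃ w₁₂ w₂₃ w₃₁ u₁ u₂ u₃, Z z₁ → Z z₂ → Z z₃ →
      z₁ * z₂ - z₂ * z₁ = t * w₁₂ → z₂ * z₃ - z₃ * z₂ = t * w₂₃ →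
      z₃ * z₁ - z₁ * z₃ = t * w₃₁ →
      z₁ * w₂₃ - w₂₃ * z₁ = t * u₁ → z₂ * w₃₁ - w₃₁ * z₂ = t * u₂ →
      z₃ * w₁₂ - w₁₂ * z₃ = t * u₃ → I (u₁ + u₂ + u₃)) ∧
    -- Leibniz rule mod tA
    (∀ z₁ z₂ z₃ w w₂ w₃, Z z₁ → Z z₂ → Z z₃ →
      z₁ * (z₂ * z₃) - (z₂ * z₃) * z₁ = t * w →
      z₁ * z₂ - z₂ * z₁ = t * w₂ → z₁ * z₃ - z₃ * z₁ = t * w₃ →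
      I (w - (w₂ * z₃ + z₂ * w₃))) := by

  have hcancel : ∀ a b : A, t * a = t * b → a = b := by
    intro a b h
    have h0 : t * (a - b) = 0 := by rw [mul_sub, h, sub_self]
    exact sub_eq_zero.mp (hreg _ h0)
  have hI0 : I 0 := (hI 0).mpr ⟨0, by rw [mul_zero]⟩
  have hIt : ∀ x : A, I (t * x) := fun x => (hI _).mpr ⟨x, rfl⟩
  refine ⟨?_, ?_, ?_, ?_, ?_, ?_, ?_, ?_⟩
  · -- commutator lies in tA
    intro z₁ z₂ h₁ _
    exact (hZ z₁).mp h₁ z₂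
  · -- divided commutator is central mod tA
    intro z₁ z₂ w h₁ h₂ heq
    rw [hZ]
    intro a
    obtain ⟨b₁, hb₁⟩ := (hI _).mp ((hZ z₁).mp h₁ a)
    obtain ⟨b₂, hb₂⟩ := (hI _).mp ((hZ z₂).mp h₂ a)
    obtain ⟨c₁, hc₁⟩ := (hI _).mp ((hZ z₁).mp h₁ b₂)
    obtain ⟨c₂, hc₂⟩ := (hI _).mp ((hZ z₂).mp h₂ b₁)
    have key : w * a - a * w = t * (c₁ - c₂) := by
      apply hcancel
      linear_combination (norm := noncomm_ring) -(heq * a) + a * heq - (hcen a) * w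
        + z₁ * hb₂ + hb₁ * z₂ - z₂ * hb₁ - hb₂ * z₁
        + t * hc₁ - t * hc₂ - (hcen z₁) * b₂ + (hcen z₂) * b₁
    rw [key]; exact hIt _
  · -- independence of lifts
    intro z₁ z₁' z₂ z₂' w w' h₁ h₂ hd₁ hd₂ heq heq'
    obtain ⟨d₁, hd₁⟩ := (hI _).mp hd₁
    obtain ⟨d₂, hd₂⟩ := (hI _).mp hd₂
    obtain ⟨e₁, he₁⟩ := (hI _).mp ((hZ z₁).mp h₁ d₂)
    obtain ⟨e₂, he₂⟩ := (hI _).mp ((hZ z₂).mp h₂ d₁)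
    have key : w - w' = t * (e₁ - e₂ + (d₂ * d₁ - d₁ * d₂)) := by
      apply hcancel
      have hz₁' : z₁' = z₁ - t * d₁ := by linear_combination (norm := noncomm_ring) -hd₁
      have hz₂' : z₂' = z₂ - t * d₂ := by linear_combination (norm := noncomm_ring) -hd₂
      subst hz₁' hz₂'
      linear_combination (norm := noncomm_ring) -heq + heq' + t * he₁ - t * he₂
        - (hcen z₁) * d₂ + (hcen z₂) * d₁ + t * (hcen d₁) * d₂ - t * (hcen d₂) * d₁
    rw [key]; exact hIt _
  · -- antisymmetry
    intro z₁ z₂ w w' heq heq'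
    have key : w + w' = 0 := by
      apply hcancel; rw [mul_zero]
      linear_combination (norm := noncomm_ring) -heq - heq'
    rw [key]; exact hI0
  · -- additivity
    intro z₁ z₂ z₃ w w₂ w₃ h h₂ h₃
    have key : w - (w₂ + w₃) = 0 := by
      apply hcancel; rw [mul_zero]
      linear_combination (norm := noncomm_ring) -h + h₂ + h₃
    rw [key]; exact hI0
  · -- ℂ-linearity
    intro c z₁ z₂ w w₂ h h₂
    have key : w - c • w₂ = 0 := by
      apply hcancel; rw [mul_zero]
      have : t * (c • w₂) = c • (t * w₂) := mul_smul_comm c t w₂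
      rw [mul_sub, h.symm, this, ← h₂]
      rw [smul_sub, mul_smul_comm, smul_mul_assoc]
      abel
    rw [key]; exact hI0
  · -- Jacobi
    intro z₁ z₂ z₃ w₁₂ w₂₃ w₃₁ u₁ u₂ u₃ _ _ _ h₁₂ h₂₃ h₃₁ hu₁ hu₂ hu₃
    have key : u₁ + u₂ + u₃ = 0 := by
      apply hcancel; rw [mul_zero]; apply hcancel
      linear_combination (norm := noncomm_ring) -(t * hu₁) - t * hu₂ - t * hu₃
        - z₁ * h₂₃ - z₂ * h₃₁ - z₃ * h₁₂ + h₂₃ * z₁ + h₃₁ * z₂ + h₁₂ * z₃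
        + (hcen z₁) * w₂₃ + (hcen z₂) * w₃₁ + (hcen z₃) * w₁₂
    rw [key]; exact hI0
  · -- Leibniz
    intro z₁ z₂ z₃ w w₂ w₃ _ _ _ h h₂ h₃
    have key : w - (w₂ * z₃ + z₂ * w₃) = 0 := by
      apply hcancel; rw [mul_zero]
      linear_combination (norm := noncomm_ring) -h + h₂ * z₃ + z₂ * h₃ - (hcen z₂) * w₃
    rw [key]; exact hI0
end

section
/- Let R be a finite-dimensional Z-graded associative unital algebra over a field. Then the Jacobson radical of R is a homogeneous (graded) ideal: if a ∈ rad(R) and a = Σₙ aₙ is its decomposition into homogeneous components, then every aₙ belongs to rad(R). -/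
open DirectSum

/-! Auxiliary definitions and lemmas for proving that the Jacobson radical of a
finite-dimensional `ℤ`-graded algebra is homogeneous. -/

section Wfun

variable {R : Type*} [Ring R]

/-- `wfun c [r₁, …, rₜ] = c * r₁ * c * r₂ * ⋯ * rₜ * c` (with `t + 1` copies of `c`). -/
def wfun (c : R) : List R → R
  | [] => c
  | r :: l => c * (r * wfun c l)

@[simp] lemma wfun_nil (c : R) : wfun c ([] : List R) = c := rfl

@[simp] lemma wfun_cons (c r : R) (l : List R) : wfun c (r :: l) = c * (r * wfun c l) := rfl

/-- Iterated "power" of a left ideal: `JPow J n = J • (J • ⋯ • ⊤)`. -/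
def JPow (J : Ideal R) : ℕ → Ideal R
  | 0 => ⊤
  | n + 1 => J • JPow J n

@[simp] lemma JPow_zero (J : Ideal R) : JPow J 0 = ⊤ := rfl

@[simp] lemma JPow_succ (J : Ideal R) (n : ℕ) : JPow J (n + 1) = J • JPow J n := rfl

lemma JPow_succ_le (J : Ideal R) : ∀ n, JPow J (n + 1) ≤ JPow J n := by
  intro n
  induction n with
  | zero => exact le_top
  | succ t ih => exact Submodule.smul_mono le_rfl ih

lemma wfun_mem_jpow {J : Ideal R} {a : R} (ha : a ∈ J) :
    ∀ l : List R, wfun a l ∈ JPow J (l.length + 1) := by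
  intro l
  induction l with
  | nil =>
    have h0 : a • (1 : R) ∈ J • (⊤ : Submodule R R) :=
      Submodule.smul_mem_smul ha Submodule.mem_top
    have h1 : a • (1 : R) = a := by rw [smul_eq_mul, mul_one]
    rw [h1] at h0
    exact h0
  | cons r l ih =>
    have h1 : r * wfun a l ∈ JPow J (l.length + 1) := Submodule.smul_mem _ r ih
    simpa [smul_eq_mul] using Submodule.smul_mem_smul ha h1

lemma pow_eq_mul_wfun (y c : R) : ∀ t : ℕ, (y * c) ^ (t + 1) = y * wfun c (List.replicate t y)
  | 0 => by simp
  | t + 1 => by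
    rw [pow_succ', pow_eq_mul_wfun y c t, List.replicate_succ, wfun_cons]
    rw [← mul_assoc, ← mul_assoc, ← mul_assoc]

end Wfun

section Nakayama

variable {R : Type*} [Ring R]

lemma bot_mul_mem {x y : R} (hx : x ∈ (⊥ : Ideal R)) : x * y ∈ (⊥ : Ideal R) := by
  rw [Ideal.mem_bot] at hx ⊢
  rw [hx, zero_mul]

lemma jac_mul_mem {x : R} (hx : x ∈ Ideal.jacobson (⊥ : Ideal R)) (y : R) :
    x * y ∈ Ideal.jacobson (⊥ : Ideal R) :=
  (Ideal.jacobson (⊥ : Ideal R)).mul_mem_right y hx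

lemma nakayama_aux (s : Finset R) :
    ∀ N : Ideal R, Submodule.span R (↑s : Set R) = N →
      Ideal.jacobson (⊥ : Ideal R) • N = N → N = ⊥ := by
  classical
  induction s using Finset.induction_on with
  | empty =>
    intro N hspan _
    simpa using hspan.symm
  | @insert x₀ s hx₀ ih =>
    intro N hspan hsm
    set J := Ideal.jacobson (⊥ : Ideal R) with hJ
    set Φ : R →ₗ[R] R := DistribMulAction.toLinearMap R (S := Rᵐᵒᵖ) R (MulOpposite.op x₀)
      with hΦ
    have hΦ_apply : ∀ z : R, Φ z = z * x₀ := fun z => op_smul_eq_mul _ _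
    have hsplit : N = Submodule.span R {x₀} ⊔ Submodule.span R (↑s : Set R) := by
      rw [← hspan, Finset.coe_insert, Submodule.span_insert]
    have hx₀N : x₀ ∈ N := hspan ▸ Submodule.subset_span (by simp)
    have h1 : J • Submodule.span R {x₀} ≤ Submodule.map Φ J := by
      rw [Submodule.smul_le]
      intro j hj y hy
      obtain ⟨r, rfl⟩ := Submodule.mem_span_singleton.mp hy
      refine ⟨j * r, jac_mul_mem hj r, ?_⟩
      rw [hΦ_apply, smul_eq_mul, smul_eq_mul, mul_assoc]
    have h2 : J • Submodule.span R (↑s : Set R) ≤ Submodule.span R (↑s : Set R) := by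
      rw [Submodule.smul_le]
      intro j hj y hy
      exact Submodule.smul_mem _ j hy
    have hx₀K : x₀ ∈ Submodule.map Φ J ⊔ Submodule.span R (↑s : Set R) := by
      have hx0 : x₀ ∈ J • N := by rw [hsm]; exact hx₀N
      rw [hsplit, Submodule.smul_sup] at hx0
      exact sup_le_sup h1 h2 hx0
    obtain ⟨u, hu, v, hv, huv⟩ := Submodule.mem_sup.mp hx₀K
    obtain ⟨c, hc, rfl⟩ := Submodule.mem_map.mp hu
    rw [hΦ_apply] at huv
    have hveq : (1 - c) * x₀ = v := by
      rw [sub_mul, one_mul]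
      exact (eq_sub_of_add_eq' huv).symm
    obtain ⟨z, hz⟩ := Ideal.mem_jacobson_iff.mp hc (-1)
    rw [Ideal.mem_bot] at hz
    rw [mul_neg_one, neg_mul] at hz
    rw [sub_eq_zero] at hz
    have hz1 : z * (1 - c) = 1 := by
      rw [mul_sub, mul_one, sub_eq_neg_add]
      exact hz
    have hx₀s : x₀ ∈ Submodule.span R (↑s : Set R) := by
      have : x₀ = z * v := by
        rw [← hveq, ← mul_assoc, hz1, one_mul]
      rw [this]
      exact Submodule.smul_mem _ z hv
    have hNs : Submodule.span R (↑s : Set R) = N := by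
      apply le_antisymm
      · rw [hsplit]; exact le_sup_right
      · rw [← hspan]
        apply Submodule.span_le.mpr
        intro t ht
        rcases Finset.mem_insert.mp (by exact_mod_cast ht) with rfl | h
        · exact hx₀s
        · exact Submodule.subset_span h
    exact ih N hNs hsm

lemma exists_jpow_eq_bot (k : Type*) [Field k] [Algebra k R] [FiniteDimensional k R] :
    ∃ m : ℕ, JPow (Ideal.jacobson (⊥ : Ideal R)) m = ⊥ := by
  set J := Ideal.jacobson (⊥ : Ideal R) with hJ
  let f : ℕ → ℕ := fun n => Module.finrank k ((JPow J n).restrictScalars k)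
  have hne : (Set.range f).Nonempty := ⟨f 0, 0, rfl⟩
  obtain ⟨n₀, hn₀⟩ := Nat.sInf_mem hne
  have hle : ((JPow J (n₀ + 1)).restrictScalars k) ≤ ((JPow J n₀).restrictScalars k) :=
    fun x hx => JPow_succ_le J n₀ hx
  have hfr : Module.finrank k ((JPow J n₀).restrictScalars k) ≤
      Module.finrank k ((JPow J (n₀ + 1)).restrictScalars k) := by
    calc Module.finrank k ((JPow J n₀).restrictScalars k) = sInf (Set.range f) := hn₀
    _ ≤ f (n₀ + 1) := Nat.sInf_le ⟨n₀ + 1, rfl⟩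
  have heqr := Submodule.eq_of_le_of_finrank_le hle hfr
  have heq : JPow J (n₀ + 1) = JPow J n₀ := Submodule.restrictScalars_injective k R R heqr
  have hFG : (JPow J n₀).FG := by
    have hnoeth : IsNoetherian R R := isNoetherian_of_tower k (inferInstance : IsNoetherian k R)
    exact IsNoetherian.noetherian _
  obtain ⟨s, hs⟩ := hFG
  refine ⟨n₀, nakayama_aux s _ hs ?_⟩
  rw [← JPow_succ, heq]

end Nakayama

section Graded

variable {k R : Type*} [Field k] [Ring R] [Algebra k R]
variable (𝒜 : ℤ → Submodule k R) [GradedAlgebra 𝒜]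
variable [∀ (i : ℤ) (x : 𝒜 i), Decidable (x ≠ 0)]

lemma comp_mul_comp {x y : R} {p q : ℤ}
    (hx : ∀ i, p < i → (decompose 𝒜 x i : R) = 0)
    (hy : ∀ j, q < j → (decompose 𝒜 y j : R) = 0) :
    (∀ n, p + q < n → (decompose 𝒜 (x * y) n : R) = 0) ∧
      (decompose 𝒜 (x * y) (p + q) : R) = (decompose 𝒜 x p : R) * (decompose 𝒜 y q : R) := by
  have hsx : ∀ i ∈ (decompose 𝒜 x).support, i ≤ p := by
    intro i hi
    by_contra h
    push_neg at h
    exact DFinsupp.mem_support_iff.mp hi (Subtype.ext (hx i h))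
  have hsy : ∀ j ∈ (decompose 𝒜 y).support, j ≤ q := by
    intro j hj
    by_contra h
    push_neg at h
    exact DFinsupp.mem_support_iff.mp hj (Subtype.ext (hy j h))
  have key : ∀ n : ℤ, (decompose 𝒜 (x * y) n : R) =
      ∑ ij ∈ (((decompose 𝒜 x).support ×ˢ (decompose 𝒜 y).support).filter
        (fun ij : ℤ × ℤ => ij.1 + ij.2 = n)),
        ((decompose 𝒜 x ij.1 : R) * (decompose 𝒜 y ij.2 : R)) := by
    intro n
    rw [DirectSum.decompose_mul]
    exact DirectSum.coe_mul_apply 𝒜 _ _ n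
  constructor
  · intro n hn
    rw [key n]
    apply Finset.sum_eq_zero
    rintro ⟨i, j⟩ hij
    rw [Finset.mem_filter, Finset.mem_product] at hij
    obtain ⟨⟨hi, hj⟩, hij⟩ := hij
    have := hsx i hi
    have := hsy j hj
    exact absurd hij (by omega)
  · rw [key (p + q)]
    apply Finset.sum_eq_single (p, q)
    · rintro ⟨i, j⟩ hij hne
      rw [Finset.mem_filter, Finset.mem_product] at hij
      obtain ⟨⟨hi, hj⟩, hij⟩ := hij
      have h1 := hsx i hi
      have h2 := hsy j hj
      exact absurd (Prod.ext (by omega : i = p) (by omega : j = q)) hne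
    · intro hpq
      rw [Finset.mem_filter, Finset.mem_product] at hpq
      push_neg at hpq
      by_cases hp : p ∈ (decompose 𝒜 x).support
      · have hq : q ∉ (decompose 𝒜 y).support := fun hq => hpq ⟨hp, hq⟩ rfl
        rw [DFinsupp.notMem_support_iff.mp hq]
        simp
      · rw [DFinsupp.notMem_support_iff.mp hp]
        simp

lemma top_component_mem_jacobson (m' : ℕ) (a : R)
    (hw : ∀ l : List R, l.length = m' → wfun a l = 0)
    (T : ℤ) (hT : ∀ i, T < i → (decompose 𝒜 a i : R) = 0) :
    (decompose 𝒜 a T : R) ∈ Ideal.jacobson (⊥ : Ideal R) := by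
  set c : R := (decompose 𝒜 a T : R) with hc
  -- Step 1: for lists of homogeneous elements, `wfun c l` is a component of `wfun a l`.
  have H1 : ∀ l : List R, (∀ r ∈ l, ∃ e : ℤ, r ∈ 𝒜 e) →
      ∃ D : ℤ, (∀ n, D < n → (decompose 𝒜 (wfun a l) n : R) = 0) ∧
        (decompose 𝒜 (wfun a l) D : R) = wfun c l := by
    intro l hl
    induction l with
    | nil => exact ⟨T, hT, rfl⟩
    | cons r l ih =>
      obtain ⟨e, hr⟩ := hl r (by simp)
      obtain ⟨D, hbd, hpi⟩ := ih (fun r' hr' => hl r' (List.mem_cons_of_mem _ hr'))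
      have hrb : ∀ i, e < i → (decompose 𝒜 r i : R) = 0 :=
        fun i hi => DirectSum.decompose_of_mem_ne 𝒜 hr (ne_of_lt hi)
      obtain ⟨hbd2, hpi2⟩ := comp_mul_comp 𝒜 hrb hbd
      obtain ⟨hbd3, hpi3⟩ := comp_mul_comp 𝒜 hT hbd2
      refine ⟨T + (e + D), hbd3, ?_⟩
      rw [wfun_cons, wfun_cons, hpi3, hpi2, hpi,
        DirectSum.decompose_of_mem_same 𝒜 hr]
  -- slot additivity of `wfun`
  have slot_zero : ∀ (l₁ l₂ : List R), wfun c (l₁ ++ (0 : R) :: l₂) = 0 := by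
    intro l₁ l₂
    induction l₁ with
    | nil => simp
    | cons h t ih => simp [ih]
  have slot_add : ∀ (l₁ : List R) (x y : R) (l₂ : List R),
      wfun c (l₁ ++ (x + y) :: l₂) = wfun c (l₁ ++ x :: l₂) + wfun c (l₁ ++ y :: l₂) := by
    intro l₁ x y l₂
    induction l₁ with
    | nil => simp [add_mul, mul_add]
    | cons h t ih => simp [ih, mul_add]
  have slot_sum : ∀ (l₁ : List R) (s : Finset ℤ) (g : ℤ → R) (l₂ : List R),
      wfun c (l₁ ++ (∑ i ∈ s, g i) :: l₂) = ∑ i ∈ s, wfun c (l₁ ++ g i :: l₂) := by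
    intro l₁ s g l₂
    classical
    induction s using Finset.induction_on with
    | empty => simpa using slot_zero l₁ l₂
    | @insert j s hj ih =>
      rw [Finset.sum_insert hj, Finset.sum_insert hj, slot_add, ih]
  -- Step 2: `wfun c l = 0` for all lists of the right length.
  have H2 : ∀ l₂ l₁ : List R, (∀ r ∈ l₁, ∃ e : ℤ, r ∈ 𝒜 e) →
      (l₁ ++ l₂).length = m' → wfun c (l₁ ++ l₂) = 0 := by
    intro l₂
    induction l₂ with
    | nil =>
      intro l₁ h1 hlen
      obtain ⟨D, _, hpi⟩ := H1 l₁ h1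
      rw [List.append_nil] at hlen ⊢
      rw [hw l₁ hlen, DirectSum.decompose_zero] at hpi
      simpa using hpi.symm
    | cons r l₂ ih =>
      intro l₁ h1 hlen
      have hdec := DirectSum.sum_support_decompose 𝒜 r
      rw [show l₁ ++ r :: l₂ =
        l₁ ++ (∑ i ∈ (decompose 𝒜 r).support, (decompose 𝒜 r i : R)) :: l₂ by rw [hdec]]
      rw [slot_sum]
      apply Finset.sum_eq_zero
      intro i hi
      rw [show l₁ ++ ((decompose 𝒜 r i : R)) :: l₂ =
        (l₁ ++ [(decompose 𝒜 r i : R)]) ++ l₂ by simp]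
      apply ih
      · intro r' hr'
        rcases List.mem_append.mp hr' with h | h
        · exact h1 r' h
        · rw [List.mem_singleton.mp h]
          exact ⟨i, SetLike.coe_mem _⟩
      · simp only [List.length_append, List.length_cons, List.length_nil] at hlen ⊢
        omega
  -- Step 3: `y * c` is nilpotent for all `y`.
  have H3 : ∀ y : R, (y * c) ^ (m' + 1) = 0 := by
    intro y
    rw [pow_eq_mul_wfun]
    rw [show List.replicate m' y = [] ++ List.replicate m' y from rfl]
    rw [H2 (List.replicate m' y) [] (by simp) (by simp [List.length_replicate])]
    rw [mul_zero]
  -- Step 4: conclude membership in the Jacobson radical.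
  rw [Ideal.mem_jacobson_iff]
  intro y
  have hnil : IsNilpotent (y * c) := ⟨m' + 1, H3 y⟩
  obtain ⟨u, hu⟩ := hnil.isUnit_add_one
  refine ⟨(↑u⁻¹ : R), ?_⟩
  have h1 : (↑u⁻¹ : R) * (y * c + 1) = 1 := by
    rw [← hu]
    exact u.inv_mul
  rw [Ideal.mem_bot]
  have h2 : (↑u⁻¹ : R) * y * c + ↑u⁻¹ = (↑u⁻¹ : R) * (y * c + 1) := by
    rw [mul_add, mul_one, mul_assoc]
  rw [h2, h1, sub_self]

end Graded

/-- Let `R` be a finite-dimensional `ℤ`-graded associative unital algebra over a field `k`.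
Then the Jacobson radical of `R` (the intersection of all maximal left ideals, i.e.
`Ideal.jacobson ⊥`) is a homogeneous ideal: every homogeneous component of an element of
the radical again lies in the radical. -/
theorem jacobson_radical_homogeneous
    (k R : Type*) [Field k] [Ring R] [Algebra k R] [FiniteDimensional k R]
    (𝒜 : ℤ → Submodule k R) [GradedAlgebra 𝒜]
    (a : R) (ha : a ∈ Ideal.jacobson (⊥ : Ideal R)) (n : ℤ) :
    (DirectSum.decompose 𝒜 a n : R) ∈ Ideal.jacobson (⊥ : Ideal R) := by
  classical
  set J : Ideal R := Ideal.jacobson (⊥ : Ideal R) with hJ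
  obtain ⟨m, hm⟩ := exists_jpow_eq_bot (R := R) k
  match m, hm with
  | 0, hm =>
    -- the ring is trivial
    have h1 : (1 : R) ∈ (⊥ : Ideal R) := by
      rw [← hm]; exact Submodule.mem_top
    rw [Ideal.mem_bot] at h1
    have : (DirectSum.decompose 𝒜 a n : R) ∈ (⊥ : Ideal R) := by
      rw [Ideal.mem_bot]
      calc (DirectSum.decompose 𝒜 a n : R) = (DirectSum.decompose 𝒜 a n : R) * 1 := by
            rw [mul_one]
      _ = 0 := by rw [h1, mul_zero]
    exact Ideal.le_jacobson this
  | t + 1, hm =>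
    -- main case: products of `t + 1` elements of `J` vanish
    have key : ∀ b : R, b ∈ J → ∀ i : ℤ, (DirectSum.decompose 𝒜 b i : R) ∈ J := by
      have main : ∀ (N : ℕ) (b : R), b ∈ J →
          (DirectSum.decompose 𝒜 b).support.card ≤ N →
          ∀ i : ℤ, (DirectSum.decompose 𝒜 b i : R) ∈ J := by
        intro N
        induction N with
        | zero =>
          intro b _ hcard i
          have hse : (DirectSum.decompose 𝒜 b).support = ∅ := by
            rw [← Finset.card_eq_zero]; omega
          have hz : DirectSum.decompose 𝒜 b i = 0 :=
            DFinsupp.notMem_support_iff.mp (by rw [hse]; exact Finset.notMem_empty i)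
          rw [hz, ZeroMemClass.coe_zero]
          exact Submodule.zero_mem _
        | succ N ih =>
          intro b hb hcard i
          by_cases hsupp : (DirectSum.decompose 𝒜 b).support.Nonempty
          · set T : ℤ := (DirectSum.decompose 𝒜 b).support.max' hsupp with hTdef
            have hT : ∀ j, T < j → (DirectSum.decompose 𝒜 b j : R) = 0 := by
              intro j hj
              have : j ∉ (DirectSum.decompose 𝒜 b).support := by
                intro hmem
                exact absurd (Finset.le_max' _ j hmem) (by omega)
              rw [DFinsupp.notMem_support_iff.mp this]
              simp
            have hwb : ∀ l : List R, l.length = t → wfun b l = 0 := by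
              intro l hl
              have : wfun b l ∈ JPow J (l.length + 1) := wfun_mem_jpow hb l
              rw [hl, hm] at this
              exact Ideal.mem_bot.mp this
            have hcJ : (DirectSum.decompose 𝒜 b T : R) ∈ J := by
              rw [hJ]
              exact top_component_mem_jacobson 𝒜 t b hwb T hT
            set c : R := (DirectSum.decompose 𝒜 b T : R) with hcdef
            have hb' : b - c ∈ J := Submodule.sub_mem _ hb hcJ
            have hcomp : ∀ j : ℤ, (DirectSum.decompose 𝒜 (b - c) j : R) =
                (DirectSum.decompose 𝒜 b j : R) -
                  (DirectSum.decompose 𝒜 c j : R) := by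
              intro j
              rw [DirectSum.decompose_sub]
              simp
            have hcc : ∀ j : ℤ, (DirectSum.decompose 𝒜 c j : R) =
                if j = T then c else 0 := by
              intro j
              by_cases hjT : j = T
              · subst hjT
                rw [if_pos rfl]
                exact DirectSum.decompose_of_mem_same 𝒜 (SetLike.coe_mem _)
              · rw [if_neg hjT]
                exact DirectSum.decompose_of_mem_ne 𝒜 (SetLike.coe_mem _) (Ne.symm hjT)
            have hcomp0 : ∀ j : ℤ, (DirectSum.decompose 𝒜 (b - c) j : R) =
                (DirectSum.decompose 𝒜 b j : R) - (if j = T then c else 0) := by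
              intro j
              rw [hcomp j, hcc j]
            have hsub : (DirectSum.decompose 𝒜 (b - c)).support ⊆
                (DirectSum.decompose 𝒜 b).support.erase T := by
              intro j hj
              rw [DFinsupp.mem_support_iff] at hj
              have hj' : (DirectSum.decompose 𝒜 (b - c) j : R) ≠ 0 :=
                fun h => hj (ZeroMemClass.coe_eq_zero.mp h)
              rw [hcomp0 j] at hj'
              have hjT : j ≠ T := by
                intro h
                apply hj'
                rw [if_pos h, h, hcdef]
                exact sub_self _
              refine Finset.mem_erase.mpr ⟨hjT, DFinsupp.mem_support_iff.mpr ?_⟩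
              intro h0
              apply hj'
              rw [if_neg hjT, sub_zero, h0, ZeroMemClass.coe_zero]
            have hcard' : (DirectSum.decompose 𝒜 (b - c)).support.card ≤ N := by
              have hTmem : T ∈ (DirectSum.decompose 𝒜 b).support :=
                Finset.max'_mem _ hsupp
              have h1 := Finset.card_le_card hsub
              have h2 := Finset.card_erase_of_mem hTmem
              omega
            have hIH := ih (b - c) hb' hcard'
            have : (DirectSum.decompose 𝒜 b i : R) =
                (DirectSum.decompose 𝒜 (b - c) i : R) +
                  (DirectSum.decompose 𝒜 c i : R) := by
              rw [hcomp]
              abel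
            rw [this]
            apply Submodule.add_mem _ (hIH i)
            rw [hcc]
            by_cases hiT : i = T
            · rw [if_pos hiT]; exact hcJ
            · rw [if_neg hiT]; exact Submodule.zero_mem _
          · rw [Finset.not_nonempty_iff_eq_empty] at hsupp
            have hz : DirectSum.decompose 𝒜 b i = 0 :=
              DFinsupp.notMem_support_iff.mp (by rw [hsupp]; exact Finset.notMem_empty i)
            rw [hz, ZeroMemClass.coe_zero]
            exact Submodule.zero_mem _
      intro b hb i
      exact main (DirectSum.decompose 𝒜 b).support.card b hb le_rfl i
    exact key a ha n
end
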